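/- Let H be a weak Hopf algebra with H = H_s. Then every left partial H-module coalgebra is a left H-module coalgebra (via the same action map). -/
import Mathlib


open TensorProduct Coalgebra

noncomputable section

variable (k : Type*) [Field k]

section WeakHopfDefs

variable (H : Type*) [Ring H] [Algebra k H] [Coalgebra k H]

/-- The target map `ε_t(h) = ε(1₁ h) 1₂` of a weak bialgebra. -/
def wεt (h : H) : H :=
  (TensorProduct.lid k H)
    ((TensorProduct.map (counit (R := k) ∘ₗ LinearMap.mulRight k h) (LinearMap.id))
      (comul (R := k) (1 : H)))

/-- The source map `ε_s(h) = 1₁ ε(h 1₂)` of a weak bialgebra. -/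
def wεs (h : H) : H :=
  (TensorProduct.rid k H)
    ((TensorProduct.map (LinearMap.id) (counit (R := k) ∘ₗ LinearMap.mulLeft k h))
      (comul (R := k) (1 : H)))

/-- A weak Hopf algebra structure on an algebra `H` which is also a coalgebra:
the weak bialgebra axioms together with an antipode `S`. -/
structure WeakHopf : Type _ where
  /-- Δ is multiplicative -/
  comul_mul : ∀ h g : H, comul (R := k) (h * g) = comul (R := k) h * comul (R := k) g
  /-- ε(hgl) = Σ ε(h g₁) ε(g₂ l) -/
  counit_weak_mul : ∀ h g l : H, counit (R := k) (h * g * l)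
      = LinearMap.mul' k k
          ((TensorProduct.map (counit (R := k) ∘ₗ LinearMap.mulLeft k h)
              (counit (R := k) ∘ₗ LinearMap.mulRight k l)) (comul (R := k) g))
  /-- ε(hgl) = Σ ε(h g₂) ε(g₁ l) -/
  counit_weak_mul' : ∀ h g l : H, counit (R := k) (h * g * l)
      = LinearMap.mul' k k
          ((TensorProduct.map (counit (R := k) ∘ₗ LinearMap.mulLeft k h)
              (counit (R := k) ∘ₗ LinearMap.mulRight k l))
            ((TensorProduct.comm k H H) (comul (R := k) g)))
  /-- (1 ⊗ Δ(1))(Δ(1) ⊗ 1) = Δ²(1) -/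
  comul_one_left :
      ((1 : H) ⊗ₜ[k] comul (R := k) (1 : H))
          * ((TensorProduct.assoc k H H H) (comul (R := k) (1 : H) ⊗ₜ[k] (1 : H)))
        = (LinearMap.lTensor H (comul (R := k))) (comul (R := k) (1 : H))
  /-- (Δ(1) ⊗ 1)(1 ⊗ Δ(1)) = Δ²(1) -/
  comul_one_right :
      ((TensorProduct.assoc k H H H) (comul (R := k) (1 : H) ⊗ₜ[k] (1 : H)))
          * ((1 : H) ⊗ₜ[k] comul (R := k) (1 : H))
        = (LinearMap.lTensor H (comul (R := k))) (comul (R := k) (1 : H))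
  /-- the antipode -/
  S : H →ₗ[k] H
  /-- Σ h₁ S(h₂) = ε_t(h) -/
  antipode_t : ∀ h : H,
      LinearMap.mul' k H ((LinearMap.lTensor H S) (comul (R := k) h)) = wεt k H h
  /-- Σ S(h₁) h₂ = ε_s(h) -/
  antipode_s : ∀ h : H,
      LinearMap.mul' k H ((LinearMap.rTensor H S) (comul (R := k) h)) = wεs k H h
  /-- Σ S(h₁) h₂ S(h₃) = S(h) -/
  antipode_mid : ∀ h : H,
      LinearMap.mul' k H
        ((TensorProduct.map S (LinearMap.mul' k H ∘ₗ LinearMap.lTensor H S))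
          ((LinearMap.lTensor H (comul (R := k))) (comul (R := k) h))) = S h

end WeakHopfDefs

section Actions

variable (H : Type*) [Ring H] [Algebra k H] [Coalgebra k H]
variable (C : Type*) [AddCommGroup C] [Module k C] [Coalgebra k C]

/-- The Sweedler sum `Σ (h g₁ · c₁) ε(g₂ · c₂)` appearing in (PMC3). -/
def pmc3RHS (act : H →ₗ[k] C →ₗ[k] C) (h g : H) (c : C) : C :=
  (TensorProduct.rid k C)
    ((TensorProduct.map
        ((TensorProduct.lift act) ∘ₗ (LinearMap.rTensor C (LinearMap.mulLeft k h)))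
        (counit (R := k) ∘ₗ (TensorProduct.lift act)))
      ((TensorProduct.tensorTensorTensorComm k H H C C)
        (comul (R := k) g ⊗ₜ[k] comul (R := k) c)))

/-- The Sweedler sum `Σ ε(g₁ · c₁) (h g₂ · c₂)` appearing in the symmetry condition. -/
def pmc3symRHS (act : H →ₗ[k] C →ₗ[k] C) (h g : H) (c : C) : C :=
  (TensorProduct.lid k C)
    ((TensorProduct.map
        (counit (R := k) ∘ₗ (TensorProduct.lift act))
        ((TensorProduct.lift act) ∘ₗ (LinearMap.rTensor C (LinearMap.mulLeft k h))))
      ((TensorProduct.tensorTensorTensorComm k H H C C)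
        (comul (R := k) g ⊗ₜ[k] comul (R := k) c)))

/-- (MC2)/(PMC2): `Δ(h·c) = (h₁·c₁) ⊗ (h₂·c₂)`. -/
def SweedlerComulCompat (act : H →ₗ[k] C →ₗ[k] C) : Prop :=
  ∀ (h : H) (c : C),
    comul (R := k) (act h c)
      = (TensorProduct.map (TensorProduct.lift act) (TensorProduct.lift act))
          ((TensorProduct.tensorTensorTensorComm k H H C C)
            (comul (R := k) h ⊗ₜ[k] comul (R := k) c))

/-- `C` is a left partial `H`-module coalgebra via `act` (`act h c = h · c`). -/
structure IsPartialModuleCoalgebra (act : H →ₗ[k] C →ₗ[k] C) : Prop where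
  pmc1 : ∀ c : C, act 1 c = c
  pmc2 : SweedlerComulCompat k H C act
  pmc3 : ∀ (h g : H) (c : C), act h (act g c) = pmc3RHS k H C act h g c

/-- `C` is a symmetric left partial `H`-module coalgebra via `act`. -/
structure IsSymmetricPartialModuleCoalgebra (act : H →ₗ[k] C →ₗ[k] C)
    extends IsPartialModuleCoalgebra k H C act : Prop where
  pmc3sym : ∀ (h g : H) (c : C), act h (act g c) = pmc3symRHS k H C act h g c

/-- `C` is a left `H`-module coalgebra via `act`. -/
structure IsModuleCoalgebra (act : H →ₗ[k] C →ₗ[k] C) : Prop where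
  mc1 : ∀ c : C, act 1 c = c
  mc2 : SweedlerComulCompat k H C act
  mc3 : ∀ (h g : H) (c : C), act h (act g c) = act (h * g) c
  mc4 : ∀ (h : H) (c : C), counit (R := k) (act h c) = counit (R := k) (act (wεs k H h) c)

end Actions

end

noncomputable section Aux

variable {k : Type*} [Field k] {H : Type*} [Ring H] [Algebra k H] [Coalgebra k H]

/-- Collapse map `x ⊗ y ↦ ε(h x) • y`. -/
def kap (h : H) : H ⊗[k] H →ₗ[k] H :=
  (TensorProduct.lid k H).toLinearMap ∘ₗ
    TensorProduct.map (counit (R := k) ∘ₗ LinearMap.mulLeft k h) LinearMap.id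

lemma kap_tmul (h x y : H) :
    kap (k := k) h (x ⊗ₜ[k] y) = counit (R := k) (h * x) • y := by
  simp [kap]

lemma kap_one_comul (x : H) : kap (k := k) (1 : H) (comul (R := k) x) = x := by
  have : (TensorProduct.map (counit (R := k) ∘ₗ LinearMap.mulLeft k (1 : H))
      (LinearMap.id (M := H))) = LinearMap.rTensor H (counit (R := k)) := by
    rw [LinearMap.mulLeft_one, LinearMap.comp_id]; rfl
  rw [kap, LinearMap.comp_apply, this, Coalgebra.rTensor_counit_comul]
  simp

lemma wεs_rep (S : Finset (H × H))
    (hS : comul (R := k) (1 : H) = ∑ p ∈ S, p.1 ⊗ₜ[k] p.2) (h : H) :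
    wεs k H h = ∑ p ∈ S, counit (R := k) (h * p.2) • p.1 := by
  rw [wεs, hS]
  simp [TensorProduct.map_tmul, TensorProduct.rid_tmul]

lemma master (wh : WeakHopf k H) (S : Finset (H × H))
    (hS : comul (R := k) (1 : H) = ∑ p ∈ S, p.1 ⊗ₜ[k] p.2) (f : H ⊗[k] H →ₗ[k] H) :
    ∑ p ∈ S, ∑ q ∈ S, q.1 ⊗ₜ[k] f ((p.1 * q.2) ⊗ₜ[k] p.2)
      = ∑ p ∈ S, p.1 ⊗ₜ[k] f (comul (R := k) p.2) := by
  have eL : ((1 : H) ⊗ₜ[k] comul (R := k) (1 : H))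
        * ((TensorProduct.assoc k H H H) (comul (R := k) (1 : H) ⊗ₜ[k] (1 : H)))
      = ∑ p ∈ S, ∑ q ∈ S, q.1 ⊗ₜ[k] ((p.1 * q.2) ⊗ₜ[k] p.2) := by
    rw [hS, TensorProduct.tmul_sum, TensorProduct.sum_tmul, map_sum, Finset.sum_mul_sum]
    refine Finset.sum_congr rfl fun p _ => Finset.sum_congr rfl fun q _ => ?_
    simp [Algebra.TensorProduct.tmul_mul_tmul]
  have key := congrArg (LinearMap.lTensor H f) wh.comul_one_left
  rw [eL, hS] at key
  simpa [map_sum] using key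

end Aux
noncomputable section Aux2

variable {k : Type*} [Field k] {H : Type*} [Ring H] [Algebra k H] [Coalgebra k H]

lemma wεs_sum_smul (S : Finset (H × H))
    (hS : comul (R := k) (1 : H) = ∑ p ∈ S, p.1 ⊗ₜ[k] p.2)
    (T : Finset (H × H)) (c : H × H → k) :
    wεs k H (∑ p ∈ T, c p • p.1) = ∑ p ∈ T, c p • wεs k H p.1 := by
  rw [wεs_rep S hS]
  have h1 : ∀ p2 : H, counit (R := k) ((∑ q ∈ T, c q • q.1) * p2)
      = ∑ q ∈ T, c q * counit (R := k) (q.1 * p2) := fun p2 => by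
    rw [Finset.sum_mul, map_sum]
    exact Finset.sum_congr rfl fun q _ => by rw [smul_mul_assoc, map_smul, smul_eq_mul]
  calc ∑ p ∈ S, counit (R := k) ((∑ q ∈ T, c q • q.1) * p.2) • p.1
      = ∑ p ∈ S, ∑ q ∈ T, c q • (counit (R := k) (q.1 * p.2) • p.1) := by
        refine Finset.sum_congr rfl fun p _ => ?_
        rw [h1, Finset.sum_smul]
        exact Finset.sum_congr rfl fun q _ => mul_smul _ _ _
    _ = ∑ q ∈ T, c q • ∑ p ∈ S, counit (R := k) (q.1 * p.2) • p.1 := by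
        rw [Finset.sum_comm]
        exact Finset.sum_congr rfl fun q _ => (Finset.smul_sum).symm
    _ = ∑ q ∈ T, c q • wεs k H q.1 :=
        Finset.sum_congr rfl fun q _ => by rw [wεs_rep S hS]

lemma wεs_first_leg (wh : WeakHopf k H) (S : Finset (H × H))
    (hS : comul (R := k) (1 : H) = ∑ p ∈ S, p.1 ⊗ₜ[k] p.2) :
    ∑ p ∈ S, (wεs k H p.1) ⊗ₜ[k] p.2 = comul (R := k) (1 : H) := by
  calc ∑ p ∈ S, (wεs k H p.1) ⊗ₜ[k] p.2
      = ∑ p ∈ S, ∑ q ∈ S, q.1 ⊗ₜ[k]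
          (kap (k := k) (1 : H) ((p.1 * q.2) ⊗ₜ[k] p.2)) := by
        refine Finset.sum_congr rfl fun p _ => ?_
        rw [wεs_rep S hS, TensorProduct.sum_tmul]
        refine Finset.sum_congr rfl fun q _ => ?_
        rw [kap_tmul, one_mul, TensorProduct.smul_tmul]
    _ = ∑ p ∈ S, p.1 ⊗ₜ[k] (kap (k := k) (1 : H) (comul (R := k) p.2)) :=
        master wh S hS (kap (k := k) (1 : H))
    _ = comul (R := k) (1 : H) := by
        rw [hS]
        exact Finset.sum_congr rfl fun p _ => by rw [kap_one_comul]

lemma wεs_idem (wh : WeakHopf k H) (h : H) : wεs k H (wεs k H h) = wεs k H h := by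
  obtain ⟨S, hS⟩ := TensorProduct.exists_finset (comul (R := k) (1 : H))
  conv_lhs => rw [wεs_rep S hS h]
  rw [wεs_sum_smul S hS S _]
  have key := congrArg
    ((TensorProduct.rid k H).toLinearMap ∘ₗ
      TensorProduct.map LinearMap.id (counit (R := k) ∘ₗ LinearMap.mulLeft k h))
    (wεs_first_leg wh S hS)
  have e1 : ∀ X : H ⊗[k] H,
      ((TensorProduct.rid k H).toLinearMap ∘ₗ
        TensorProduct.map LinearMap.id (counit (R := k) ∘ₗ LinearMap.mulLeft k h)) X
      = (TensorProduct.rid k H)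
          ((TensorProduct.map LinearMap.id (counit (R := k) ∘ₗ LinearMap.mulLeft k h)) X) :=
    fun X => rfl
  rw [e1, e1] at key
  have e2 : (TensorProduct.rid k H)
      ((TensorProduct.map LinearMap.id (counit (R := k) ∘ₗ LinearMap.mulLeft k h))
        (comul (R := k) (1 : H))) = wεs k H h := rfl
  rw [e2, map_sum, map_sum] at key
  calc ∑ p ∈ S, counit (R := k) (h * p.2) • wεs k H p.1
      = ∑ p ∈ S, (TensorProduct.rid k H)
          ((TensorProduct.map LinearMap.id (counit (R := k) ∘ₗ LinearMap.mulLeft k h))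
            ((wεs k H p.1) ⊗ₜ[k] p.2)) := by
        refine Finset.sum_congr rfl fun p _ => ?_
        simp [TensorProduct.map_tmul, TensorProduct.rid_tmul]
    _ = wεs k H h := key

lemma wεs_id (wh : WeakHopf k H) (hHs : ∀ h : H, h ∈ Set.range (wεs k H)) (h : H) :
    wεs k H h = h := by
  obtain ⟨g, hg⟩ := hHs h
  rw [← hg, wεs_idem wh]

end Aux2
noncomputable section Aux3

variable {k : Type*} [Field k] {H : Type*} [Ring H] [Algebra k H] [Coalgebra k H]

lemma kap_comul (wh : WeakHopf k H) (heps : ∀ x : H, wεs k H x = x) (h y : H) :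
    kap (k := k) h (comul (R := k) y) = h * y := by
  obtain ⟨S, hS⟩ := TensorProduct.exists_finset (comul (R := k) (1 : H))
  obtain ⟨R, hR⟩ := TensorProduct.exists_finset (comul (R := k) y)
  have lhs : kap (k := k) h (comul (R := k) y)
      = ∑ r ∈ R, counit (R := k) (h * r.1) • r.2 := by
    rw [hR, map_sum]
    exact Finset.sum_congr rfl fun r _ => kap_tmul h r.1 r.2
  have step : ∀ p2 : H, counit (R := k) (h * y * p2)
      = ∑ r ∈ R, counit (R := k) (h * r.1) * counit (R := k) (r.2 * p2) := by
    intro p2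
    rw [wh.counit_weak_mul h y p2, hR, map_sum, map_sum]
    exact Finset.sum_congr rfl fun r _ => by
      simp [TensorProduct.map_tmul, LinearMap.mul'_apply]
  calc kap (k := k) h (comul (R := k) y)
      = ∑ r ∈ R, counit (R := k) (h * r.1) • r.2 := lhs
    _ = ∑ r ∈ R, counit (R := k) (h * r.1) • wεs k H r.2 := by
        exact Finset.sum_congr rfl fun r _ => by rw [heps]
    _ = ∑ r ∈ R, ∑ p ∈ S, counit (R := k) (h * r.1) •
          (counit (R := k) (r.2 * p.2) • p.1) := by
        refine Finset.sum_congr rfl fun r _ => ?_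
        rw [wεs_rep S hS, Finset.smul_sum]
    _ = ∑ p ∈ S, counit (R := k) (h * y * p.2) • p.1 := by
        rw [Finset.sum_comm]
        refine Finset.sum_congr rfl fun p _ => ?_
        rw [step, Finset.sum_smul]
        exact Finset.sum_congr rfl fun r _ => (mul_smul _ _ _).symm
    _ = wεs k H (h * y) := (wεs_rep S hS (h * y)).symm
    _ = h * y := heps _

lemma swap_one (wh : WeakHopf k H) (heps : ∀ x : H, wεs k H x = x) (h : H) :
    (h ⊗ₜ[k] (1 : H)) * comul (R := k) (1 : H)
      = ((1 : H) ⊗ₜ[k] h) * comul (R := k) (1 : H) := by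
  obtain ⟨S, hS⟩ := TensorProduct.exists_finset (comul (R := k) (1 : H))
  have claimA : (h ⊗ₜ[k] (1 : H)) * comul (R := k) (1 : H)
      = ∑ p ∈ S, ∑ q ∈ S, q.1 ⊗ₜ[k] (kap (k := k) h ((p.1 * q.2) ⊗ₜ[k] p.2)) := by
    rw [hS, Finset.mul_sum]
    refine Finset.sum_congr rfl fun p _ => ?_
    rw [Algebra.TensorProduct.tmul_mul_tmul, one_mul]
    conv_lhs => rw [← heps (h * p.1), wεs_rep S hS, TensorProduct.sum_tmul]
    refine Finset.sum_congr rfl fun q _ => ?_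
    rw [kap_tmul, ← mul_assoc, TensorProduct.smul_tmul]
  have claimB : ((1 : H) ⊗ₜ[k] h) * comul (R := k) (1 : H)
      = ∑ p ∈ S, p.1 ⊗ₜ[k] (kap (k := k) h (comul (R := k) p.2)) := by
    rw [hS, Finset.mul_sum]
    refine Finset.sum_congr rfl fun p _ => ?_
    rw [Algebra.TensorProduct.tmul_mul_tmul, one_mul, kap_comul wh heps]
  rw [claimA, claimB, master wh S hS]

end Aux3
noncomputable section Aux4

variable {k : Type*} [Field k] {H : Type*} [Ring H] [Algebra k H] [Coalgebra k H]

/-- `y ⊗ z ↦ ε(r.1 y) • (r.2 z)`. -/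
def lam (r : H × H) : H ⊗[k] H →ₗ[k] H :=
  (TensorProduct.lid k H).toLinearMap ∘ₗ
    TensorProduct.map (counit (R := k) ∘ₗ LinearMap.mulLeft k r.1) (LinearMap.mulLeft k r.2)

lemma lam_tmul (r : H × H) (y z : H) :
    lam (k := k) r (y ⊗ₜ[k] z) = counit (R := k) (r.1 * y) • (r.2 * z) := by
  simp [lam]

lemma lam_sum (R : Finset (H × H)) (g : H)
    (hR : comul (R := k) g = ∑ r ∈ R, r.1 ⊗ₜ[k] r.2) (X : H ⊗[k] H) :
    ∑ r ∈ R, lam (k := k) r X = kap (k := k) (1 : H) (comul (R := k) g * X) := by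
  induction X using TensorProduct.induction_on with
  | zero => simp
  | tmul u v =>
      rw [hR, Finset.sum_mul, map_sum]
      exact Finset.sum_congr rfl fun r _ => by
        rw [Algebra.TensorProduct.tmul_mul_tmul, kap_tmul, lam_tmul, one_mul]
  | add x y hx hy => simp [mul_add, hx, hy, Finset.sum_add_distrib]

lemma comul_eq (wh : WeakHopf k H) (heps : ∀ x : H, wεs k H x = x) (g : H) :
    comul (R := k) g = ((1 : H) ⊗ₜ[k] g) * comul (R := k) (1 : H) := by
  obtain ⟨S, hS⟩ := TensorProduct.exists_finset (comul (R := k) (1 : H))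
  obtain ⟨R, hR⟩ := TensorProduct.exists_finset (comul (R := k) g)
  calc comul (R := k) g = comul (R := k) (g * 1) := by rw [mul_one]
    _ = comul (R := k) g * comul (R := k) (1 : H) := wh.comul_mul g 1
    _ = ∑ r ∈ R, ∑ p ∈ S, (r.1 * p.1) ⊗ₜ[k] (r.2 * p.2) := by
        rw [hR, hS, Finset.sum_mul_sum]
        exact Finset.sum_congr rfl fun r _ => Finset.sum_congr rfl fun p _ => by
          rw [Algebra.TensorProduct.tmul_mul_tmul]
    _ = ∑ r ∈ R, ∑ p ∈ S, ∑ q ∈ S, q.1 ⊗ₜ[k] (lam (k := k) r ((p.1 * q.2) ⊗ₜ[k] p.2)) := by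
        refine Finset.sum_congr rfl fun r _ => Finset.sum_congr rfl fun p _ => ?_
        conv_lhs => rw [← heps (r.1 * p.1), wεs_rep S hS, TensorProduct.sum_tmul]
        refine Finset.sum_congr rfl fun q _ => ?_
        rw [lam_tmul, ← mul_assoc, TensorProduct.smul_tmul]
    _ = ∑ r ∈ R, ∑ p ∈ S, p.1 ⊗ₜ[k] (lam (k := k) r (comul (R := k) p.2)) :=
        Finset.sum_congr rfl fun r _ => master wh S hS (lam (k := k) r)
    _ = ∑ p ∈ S, p.1 ⊗ₜ[k] (kap (k := k) (1 : H) (comul (R := k) g * comul (R := k) p.2)) := by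
        rw [Finset.sum_comm]
        refine Finset.sum_congr rfl fun p _ => ?_
        rw [← TensorProduct.tmul_sum, lam_sum R g hR]
    _ = ∑ p ∈ S, p.1 ⊗ₜ[k] (g * p.2) := by
        refine Finset.sum_congr rfl fun p _ => ?_
        rw [← wh.comul_mul, kap_one_comul]
    _ = ((1 : H) ⊗ₜ[k] g) * comul (R := k) (1 : H) := by
        rw [hS, Finset.mul_sum]
        exact Finset.sum_congr rfl fun p _ => by
          rw [Algebra.TensorProduct.tmul_mul_tmul, one_mul]

lemma mulLeft_comul (wh : WeakHopf k H) (heps : ∀ x : H, wεs k H x = x) (h g : H) :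
    (h ⊗ₜ[k] (1 : H)) * comul (R := k) g = comul (R := k) (h * g) := by
  rw [comul_eq wh heps g, comul_eq wh heps (h * g)]
  calc (h ⊗ₜ[k] (1 : H)) * (((1 : H) ⊗ₜ[k] g) * comul (R := k) (1 : H))
      = (h ⊗ₜ[k] (1 : H)) * ((g ⊗ₜ[k] (1 : H)) * comul (R := k) (1 : H)) := by
        rw [← swap_one wh heps g]
    _ = ((h * g) ⊗ₜ[k] (1 : H)) * comul (R := k) (1 : H) := by
        rw [← mul_assoc, Algebra.TensorProduct.tmul_mul_tmul, mul_one]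
    _ = ((1 : H) ⊗ₜ[k] (h * g)) * comul (R := k) (1 : H) := swap_one wh heps (h * g)

end Aux4
noncomputable section Aux5

variable {k : Type*} [Field k] {H : Type*} [Ring H] [Algebra k H] [Coalgebra k H]
variable {C : Type*} [AddCommGroup C] [Module k C] [Coalgebra k C]

omit [Coalgebra k H] in
lemma rTensor_mulLeft_eq (h : H) (X : H ⊗[k] H) :
    LinearMap.rTensor H (LinearMap.mulLeft k h) X = (h ⊗ₜ[k] (1 : H)) * X := by
  induction X using TensorProduct.induction_on with
  | zero => simp
  | tmul u v => simp [Algebra.TensorProduct.tmul_mul_tmul]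
  | add x y hx hy => rw [map_add, mul_add, hx, hy]

lemma pmc3RHS_eq (act : H →ₗ[k] C →ₗ[k] C) (h g : H) (c : C) :
    pmc3RHS k H C act h g c
      = (TensorProduct.rid k C)
          ((TensorProduct.map (TensorProduct.lift act)
              (counit (R := k) ∘ₗ (TensorProduct.lift act)))
            ((TensorProduct.tensorTensorTensorComm k H H C C)
              (((h ⊗ₜ[k] (1 : H)) * comul (R := k) g) ⊗ₜ[k] comul (R := k) c))) := by
  rw [pmc3RHS, ← rTensor_mulLeft_eq]
  congr 1
  have key : (TensorProduct.map
        ((TensorProduct.lift act) ∘ₗ (LinearMap.rTensor C (LinearMap.mulLeft k h)))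
        (counit (R := k) ∘ₗ (TensorProduct.lift act)))
      ∘ₗ (TensorProduct.tensorTensorTensorComm k H H C C).toLinearMap
    = (TensorProduct.map (TensorProduct.lift act)
        (counit (R := k) ∘ₗ (TensorProduct.lift act)))
      ∘ₗ (TensorProduct.tensorTensorTensorComm k H H C C).toLinearMap
      ∘ₗ (TensorProduct.map (LinearMap.rTensor H (LinearMap.mulLeft k h)) LinearMap.id) := by
    apply TensorProduct.ext_fourfold'
    intro w x y z
    simp [TensorProduct.tensorTensorTensorComm_tmul]
  have keyap := LinearMap.congr_fun key (comul (R := k) g ⊗ₜ[k] comul (R := k) c)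
  simp only [LinearMap.comp_apply, TensorProduct.map_tmul, LinearMap.id_coe, id_eq,
    LinearEquiv.coe_coe] at keyap
  exact keyap

lemma bridge1 (act : H →ₗ[k] C →ₗ[k] C) (hp2 : SweedlerComulCompat k H C act)
    (x : H) (c : C) :
    (TensorProduct.rid k C)
        ((TensorProduct.map (TensorProduct.lift act)
            (counit (R := k) ∘ₗ (TensorProduct.lift act)))
          ((TensorProduct.tensorTensorTensorComm k H H C C)
            (comul (R := k) x ⊗ₜ[k] comul (R := k) c)))
      = act x c := by
  have hm : (TensorProduct.map (TensorProduct.lift act)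
        (counit (R := k) ∘ₗ (TensorProduct.lift act)))
      = LinearMap.lTensor C (counit (R := k)) ∘ₗ
        TensorProduct.map (TensorProduct.lift act) (TensorProduct.lift act) := by
    apply TensorProduct.ext'
    intro u v
    simp
  rw [hm, LinearMap.comp_apply, ← hp2 x c, Coalgebra.lTensor_counit_comul]
  simp

end Aux5
/-- If `H = H_s`, then every left partial `H`-module coalgebra is a left
`H`-module coalgebra via the same action map. -/
theorem partial_is_global_of_source_eq_top
    (k : Type*) [Field k] (H : Type*) [Ring H] [Algebra k H] [Coalgebra k H]
    (wh : WeakHopf k H) (hHs : ∀ h : H, h ∈ Set.range (wεs k H))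
    (C : Type*) [AddCommGroup C] [Module k C] [Coalgebra k C]
    (act : H →ₗ[k] C →ₗ[k] C)
    (hp : IsPartialModuleCoalgebra k H C act) :
    IsModuleCoalgebra k H C act := by
  have heps := wεs_id wh hHs
  refine ⟨hp.pmc1, hp.pmc2, ?_, ?_⟩
  · intro h g c
    rw [hp.pmc3 h g c, pmc3RHS_eq, mulLeft_comul wh heps, bridge1 act hp.pmc2]
  · intro h c
    rw [heps h]
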